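/- For every n ≥ 2 and every k with 1 ≤ k ≤ 2^(n-1), let x_k = 2^(n-1) + k - 1 and v_k = Λ_n(x_k). Then v_k = (k-1)·2^(C(n-1,2)) + Λ_{n-1}(k-1), where k-1 is interpreted via its (n-1)-bit binary representation. -/

import Mathlib

/-- `concEnc n x` is `Λ_n(x)`: the natural number whose `C(n,2)`-bit binary
representation is the concurrence vector `λ(x_[n])` of the `n`-bit binary
representation `(b_1, …, b_n)` of `x` (with `b_1` most significant).
The bit for the pair `(i,j)`, `1 ≤ i < j ≤ n`, equals `1` iff `b_i = b_j`;
pairs are ordered `(1,2),(1,3),…,(1,n),(2,3),…,(n-1,n)` with `(1,2)` the most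
significant bit. -/
def concEnc (n x : ℕ) : ℕ :=
  ∑ i ∈ Finset.Icc 1 n, ∑ j ∈ Finset.Icc (i + 1) n,
    if x.testBit (n - i) = x.testBit (n - j)
    then 2 ^ (n.choose 2 - 1 - ((i - 1) * (2 * n - i) / 2 + (j - i - 1)))
    else 0

lemma sum_testBit (m y : ℕ) (hy : y < 2 ^ m) :
    ∑ p ∈ Finset.range m, (if y.testBit p then 2 ^ p else 0) = y := by
  induction m generalizing y with
  | zero => interval_cases y; simp
  | succ m ih =>
    rw [Finset.sum_range_succ']
    have h2 : y / 2 < 2 ^ m := by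
      have := Nat.pow_succ 2 m ▸ hy; omega
    have := ih (y / 2) h2
    simp only [Nat.testBit_succ, Nat.testBit_zero]
    have hs : ∑ p ∈ Finset.range m, (if (y/2).testBit p then 2 ^ (p+1) else 0)
        = 2 * ∑ p ∈ Finset.range m, (if (y/2).testBit p then 2 ^ p else 0) := by
      rw [Finset.mul_sum]
      exact Finset.sum_congr rfl fun p _ => by split <;> ring
    rw [hs, this]
    rcases Nat.mod_two_eq_zero_or_one y with h | h <;> simp [h] <;> omega

lemma concEnc_eq_range (n x : ℕ) : concEnc n x =
    ∑ t ∈ Finset.range n, ∑ s ∈ Finset.range (n - 1 - t),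
      (if x.testBit (n - 1 - t) = x.testBit (n - 2 - t - s)
       then 2 ^ (n.choose 2 - 1 - (t * (2 * n - 1 - t) / 2 + s)) else 0) := by
  rw [concEnc, ← Finset.Ico_add_one_right_eq_Icc, Finset.sum_Ico_eq_sum_range]
  rw [show n + 1 - 1 = n from rfl]
  refine Finset.sum_congr rfl fun t _ => ?_
  rw [← Finset.Ico_add_one_right_eq_Icc, Finset.sum_Ico_eq_sum_range]
  rw [show n + 1 - (1 + t + 1) = n - 1 - t by omega]
  refine Finset.sum_congr rfl fun s _ => ?_
  have e1 : n - (1 + t) = n - 1 - t := by omega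
  have e2 : n - (1 + t + 1 + s) = n - 2 - t - s := by omega
  have e3 : 1 + t - 1 = t := by omega
  have e4 : 2 * n - (1 + t) = 2 * n - 1 - t := by omega
  have e5 : 1 + t + 1 + s - (1 + t) - 1 = s := by omega
  rw [e1, e2, e3, e4, e5]

/-- For `n ≥ 2` and `1 ≤ k ≤ 2^(n-1)`, with `x_k = 2^(n-1)+k-1`,
`Λ_n(x_k) = (k-1)·2^C(n-1,2) + Λ_{n-1}(k-1)`. -/
theorem stmt_1 (n k : ℕ) (hn : 2 ≤ n) (hk1 : 1 ≤ k) (hk2 : k ≤ 2 ^ (n - 1)) :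
    concEnc n (2 ^ (n - 1) + k - 1)
      = (k - 1) * 2 ^ ((n - 1).choose 2) + concEnc (n - 1) (k - 1) := by
  obtain ⟨m, rfl⟩ : ∃ m, n = m + 1 := ⟨n - 1, by omega⟩
  obtain ⟨y, rfl⟩ : ∃ y, k = y + 1 := ⟨k - 1, by omega⟩
  have hm : 1 ≤ m := by omega
  have hy : y < 2 ^ m := by
    have : y + 1 ≤ 2 ^ (m + 1 - 1) := hk2
    simpa using this
  simp only [Nat.add_sub_cancel]
  rw [show 2 ^ m + (y + 1) - 1 = 2 ^ m + y by omega]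
  set x := 2 ^ m + y with hx
  have hb : ∀ p, p < m → x.testBit p = y.testBit p := fun p hp =>
    Nat.testBit_two_pow_add_gt hp y
  have hbm : x.testBit m = true := by
    rw [hx, Nat.testBit_two_pow_add_eq, Nat.testBit_lt_two_pow hy]
    rfl
  set C := m.choose 2 with hCdef
  have hC : (m + 1).choose 2 = C + m := by
    have h1 : (m + 1).choose 2 = m.choose 1 + m.choose 2 := Nat.choose_succ_succ m 1
    rw [Nat.choose_one_right] at h1
    omega
  rw [concEnc_eq_range, concEnc_eq_range, Finset.sum_range_succ']
  have hf0 : (∑ s ∈ Finset.range (m + 1 - 1 - 0),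
      (if x.testBit (m + 1 - 1 - 0) = x.testBit (m + 1 - 2 - 0 - s)
       then 2 ^ ((m + 1).choose 2 - 1 - (0 * (2 * (m + 1) - 1 - 0) / 2 + s)) else 0))
      = y * 2 ^ C := by
    rw [show m + 1 - 1 - 0 = m from rfl]
    have step : ∀ s ∈ Finset.range m,
        (if x.testBit m = x.testBit (m + 1 - 2 - 0 - s)
         then 2 ^ ((m + 1).choose 2 - 1 - (0 * (2 * (m + 1) - 1 - 0) / 2 + s)) else 0)
        = (if y.testBit (m - 1 - s) then 2 ^ (C + (m - 1 - s)) else 0) := by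
      intro s hs
      rw [Finset.mem_range] at hs
      have e1 : m + 1 - 2 - 0 - s = m - 1 - s := by omega
      have e2 : m - 1 - s < m := by omega
      rw [e1, hbm, hb _ e2]
      have e3 : (m + 1).choose 2 - 1 - (0 * (2 * (m + 1) - 1 - 0) / 2 + s)
          = C + (m - 1 - s) := by
        rw [Nat.zero_mul, Nat.zero_div, Nat.zero_add, hC]; omega
      rw [e3]
      by_cases h : y.testBit (m - 1 - s) <;> simp [h, eq_comm]
    rw [Finset.sum_congr rfl step]
    rw [Finset.sum_range_reflect (fun p => if y.testBit p then 2 ^ (C + p) else 0) m]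
    have step2 : ∀ p ∈ Finset.range m,
        (if y.testBit p then 2 ^ (C + p) else 0)
        = 2 ^ C * (if y.testBit p then 2 ^ p else 0) := by
      intro p _
      split <;> simp [pow_add]
    rw [Finset.sum_congr rfl step2, ← Finset.mul_sum, sum_testBit m y hy, mul_comm]
  have hrest : ∀ t ∈ Finset.range m,
      (∑ s ∈ Finset.range (m + 1 - 1 - (t + 1)),
        (if x.testBit (m + 1 - 1 - (t + 1)) = x.testBit (m + 1 - 2 - (t + 1) - s)
         then 2 ^ ((m + 1).choose 2 - 1 - ((t + 1) * (2 * (m + 1) - 1 - (t + 1)) / 2 + s)) else 0))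
      = ∑ s ∈ Finset.range (m - 1 - t),
        (if y.testBit (m - 1 - t) = y.testBit (m - 2 - t - s)
         then 2 ^ (C - 1 - (t * (2 * m - 1 - t) / 2 + s)) else 0) := by
    intro t ht
    rw [Finset.mem_range] at ht
    rw [show m + 1 - 1 - (t + 1) = m - 1 - t by omega]
    refine Finset.sum_congr rfl fun s hs => ?_
    rw [Finset.mem_range] at hs
    obtain ⟨e, he⟩ : ∃ e, m = t + 1 + e := ⟨m - 1 - t, by omega⟩
    have he1 : 1 ≤ e := by omega
    have eb1 : m - 1 - t < m := by omega
    have eb2 : m + 1 - 2 - (t + 1) - s = m - 2 - t - s := by omega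
    have eb3 : m - 2 - t - s < m := by omega
    rw [eb2, hb _ eb1, hb _ eb3]
    have key : (t + 1) * (t + 2 + 2 * e) = t * (t + 1 + 2 * e) + (t + 1 + e) * 2 := by ring
    have hdvd : 2 ∣ t * (t + 1 + 2 * e) := by
      rcases Nat.even_or_odd t with h | h
      · exact Dvd.dvd.mul_right h.two_dvd _
      · have : Even (t + 1 + 2 * e) := by
          rcases h with ⟨c, hc⟩; exact ⟨c + 1 + e, by omega⟩
        exact Dvd.dvd.mul_left this.two_dvd _
    have hdiv : (t + 1) * (t + 2 + 2 * e) / 2 = t * (t + 1 + 2 * e) / 2 + (t + 1 + e) := by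
      rw [key, Nat.add_mul_div_right _ _ (by norm_num : (0:ℕ) < 2)]
    have h2m : 2 * (m + 1) - 1 - (t + 1) = t + 2 + 2 * e := by omega
    have h2m' : 2 * m - 1 - t = t + 1 + 2 * e := by omega
    have hexp : (m + 1).choose 2 - 1 - ((t + 1) * (2 * (m + 1) - 1 - (t + 1)) / 2 + s)
        = C - 1 - (t * (2 * m - 1 - t) / 2 + s) := by
      rw [h2m, h2m', hC, hdiv]
      omega
    rw [hexp]
  rw [Finset.sum_congr rfl hrest, hf0, add_comm]
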